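/- Let r₀ ∈ ℝ, let f : ℝ → ℝ be continuous, continuously differentiable on ℝ \ {r₀} with sup_{x ≠ r₀} |f'(x)| < ∞. Let u ∈ C¹(ℝ²) (as a function of (x,p)), w ∈ L^∞([a,b]), and define G(p) = ∫_a^b f(u(x,p)) w(x) dx. If for each p the equation u(x,p) = r₀ has at most finitely many solutions x ∈ [a,b], then G is continuously differentiable on ℝ with G'(p) = ∫_a^b f'(u(x,p)) ∂u/∂p(x,p) w(x) dx. -/

import Mathlib

open Real

theorem stmt12 (r₀ : ℝ) (f : ℝ → ℝ) (hf : Continuous f)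
    (hf1 : ∀ x : ℝ, x ≠ r₀ → DifferentiableAt ℝ f x)
    (hfc : ContinuousOn (deriv f) {r₀}ᶜ)
    (C : ℝ) (hC : ∀ x : ℝ, x ≠ r₀ → |deriv f x| ≤ C)
    (a b : ℝ) (hab : a ≤ b)
    (u : ℝ → ℝ → ℝ) (hu : ContDiff ℝ 1 (fun p : ℝ × ℝ => u p.1 p.2))
    (w : ℝ → ℝ) (hw : Measurable w) (Cw : ℝ) (hCw : ∀ x ∈ Set.Icc a b, |w x| ≤ Cw)
    (hfin : ∀ p : ℝ, {x ∈ Set.Icc a b | u x p = r₀}.Finite) :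
    ContDiff ℝ 1 (fun p : ℝ => ∫ x in a..b, f (u x p) * w x) ∧
    ∀ p : ℝ, deriv (fun p : ℝ => ∫ x in a..b, f (u x p) * w x) p
        = ∫ x in a..b, deriv f (u x p) * deriv (fun q => u x q) p * w x := by
  classical
  set U : ℝ × ℝ → ℝ := fun q => u q.1 q.2 with hUdef
  have hUc : Continuous U := hu.continuous
  have hUd : Differentiable ℝ U := hu.differentiable one_ne_zero
  set D : ℝ → ℝ → ℝ := fun x p => (fderiv ℝ U (x, p)) (0, 1) with hDdef
  have hDcont : Continuous fun q : ℝ × ℝ => D q.1 q.2 :=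
    (hu.continuous_fderiv one_ne_zero).clm_apply continuous_const
  have hD : ∀ x p : ℝ, HasDerivAt (fun q => u x q) (D x p) p := by
    intro x p
    have h1 : HasFDerivAt U (fderiv ℝ U (x, p)) (x, p) := (hUd (x, p)).hasFDerivAt
    have h2 : HasDerivAt (fun q : ℝ => ((x, q) : ℝ × ℝ)) (0, 1) p :=
      (hasDerivAt_const p x).prodMk (hasDerivAt_id p)
    exact h1.comp_hasDerivAt p h2
  have hC0 : 0 ≤ C := le_trans (abs_nonneg _) (hC (r₀ + 1) (by simp))
  have hCw0 : 0 ≤ Cw := le_trans (abs_nonneg _) (hCw a ⟨le_refl a, hab⟩)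
  -- f is C-Lipschitz
  have key : ∀ x y : ℝ, x < y → (y ≤ r₀ ∨ r₀ ≤ x) → |f y - f x| ≤ C * (y - x) := by
    intro x y hxy hside
    have hne : ∀ c ∈ Set.Ioo x y, c ≠ r₀ := by
      rintro c ⟨h1, h2⟩ rfl
      rcases hside with h | h <;> linarith
    obtain ⟨c, hc, hc'⟩ := exists_hasDerivAt_eq_slope f (deriv f) hxy hf.continuousOn
      (fun z hz => (hf1 z (hne z hz)).hasDerivAt)
    have hCc := hC c (hne c hc)
    have h0 : f y - f x = deriv f c * (y - x) := by
      rw [hc', div_mul_cancel₀ _ (sub_ne_zero.2 hxy.ne')]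
    rw [h0, abs_mul, abs_of_pos (sub_pos.2 hxy)]
    exact mul_le_mul_of_nonneg_right hCc (by linarith)
  have lip2 : ∀ x y : ℝ, x < y → |f y - f x| ≤ C * (y - x) := by
    intro x y hxy
    rcases le_or_gt y r₀ with h | h
    · exact key x y hxy (Or.inl h)
    rcases le_or_gt r₀ x with h' | h'
    · exact key x y hxy (Or.inr h')
    have h1 := key x r₀ h' (Or.inl le_rfl)
    have h2 := key r₀ y h (Or.inr le_rfl)
    calc |f y - f x| ≤ |f y - f r₀| + |f r₀ - f x| := abs_sub_le _ _ _
    _ ≤ C * (y - r₀) + C * (r₀ - x) := add_le_add h2 h1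
    _ = C * (y - x) := by ring
  have lipf : ∀ x y : ℝ, |f y - f x| ≤ C * |y - x| := by
    intro x y
    rcases lt_trichotomy x y with h | h | h
    · rw [abs_of_pos (sub_pos.2 h)]; exact lip2 x y h
    · subst h; simp [mul_nonneg hC0 (abs_nonneg (0 : ℝ))]
    · rw [abs_sub_comm (f y), abs_sub_comm y, abs_of_pos (sub_pos.2 h)]
      exact lip2 y x h
  -- the junk/real value of deriv f at r₀ is also bounded by C
  have hCr : |deriv f r₀| ≤ C := by
    by_cases hd : DifferentiableAt ℝ f r₀
    · have h := hd.hasDerivAt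
      rw [hasDerivAt_iff_tendsto_slope] at h
      refine le_of_tendsto h.abs ?_
      filter_upwards [self_mem_nhdsWithin] with z hz
      have hz' : z ≠ r₀ := hz
      have hzpos : 0 < |z - r₀| := abs_pos.2 (sub_ne_zero.2 hz')
      rw [slope_def_field, div_eq_inv_mul, abs_mul, abs_inv]
      rw [inv_mul_le_iff₀ hzpos]
      calc |f z - f r₀| ≤ C * |z - r₀| := lipf r₀ z
      _ = |z - r₀| * C := by ring
    · rw [deriv_zero_of_not_differentiableAt hd]
      simpa using hC0
  have hCall : ∀ y : ℝ, |deriv f y| ≤ C := by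
    intro y
    by_cases h : y = r₀
    · rw [h]; exact hCr
    · exact hC y h
  -- continuity/measurability in x
  have contux : ∀ p : ℝ, Continuous fun x => u x p := fun p =>
    hUc.comp (continuous_id.prodMk continuous_const)
  have contup : ∀ x : ℝ, Continuous fun p => u x p := fun x =>
    hUc.comp (continuous_const.prodMk continuous_id)
  have contDx : ∀ p : ℝ, Continuous fun x => D x p := fun p =>
    hDcont.comp (continuous_id.prodMk continuous_const)
  have contDp : ∀ x : ℝ, Continuous fun p => D x p := fun x =>
    hDcont.comp (continuous_const.prodMk continuous_id)
  have measF : ∀ p : ℝ, MeasureTheory.AEStronglyMeasurable (fun x => f (u x p) * w x)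
      (MeasureTheory.volume.restrict (Set.uIoc a b)) := fun p =>
    (((hf.comp (contux p)).measurable).mul hw).aestronglyMeasurable.restrict
  have measF' : ∀ p : ℝ, MeasureTheory.AEStronglyMeasurable (fun x => deriv f (u x p) * D x p * w x)
      (MeasureTheory.volume.restrict (Set.uIoc a b)) := fun p =>
    ((((measurable_deriv f).comp (contux p).measurable).mul
      (contDx p).measurable).mul hw).aestronglyMeasurable.restrict
  have hIsub : Set.uIoc a b ⊆ Set.Icc a b := by
    rw [Set.uIoc_of_le hab]; exact Set.Ioc_subset_Icc_self
  -- bound for D on a compact slab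
  have Mex : ∀ p₀ : ℝ, ∃ M : ℝ, 0 ≤ M ∧
      ∀ x ∈ Set.Icc a b, ∀ p ∈ Set.Icc (p₀ - 1) (p₀ + 1), |D x p| ≤ M := by
    intro p₀
    obtain ⟨M, hM⟩ := (isCompact_Icc.prod isCompact_Icc).exists_bound_of_continuousOn
      (s := Set.Icc a b ×ˢ Set.Icc (p₀ - 1) (p₀ + 1)) hDcont.continuousOn
    refine ⟨M, ?_, fun x hx p hp => hM (x, p) ⟨hx, hp⟩⟩
    exact le_trans (norm_nonneg _)
      (hM (a, p₀) ⟨⟨le_refl a, hab⟩, ⟨by linarith, by linarith⟩⟩)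
  -- a.e. avoidance of the bad set
  have hae : ∀ p₀ : ℝ, ∀ᵐ t ∂(MeasureTheory.volume : MeasureTheory.Measure ℝ),
      t ∉ {x ∈ Set.Icc a b | u x p₀ = r₀} := by
    intro p₀
    rw [MeasureTheory.ae_iff]
    have h0 := (hfin p₀).measure_zero (μ := MeasureTheory.volume)
    simpa [and_assoc] using h0
  have hvol : (MeasureTheory.volume : MeasureTheory.Measure ℝ) (Set.uIoc a b) ≠ ⊤ := by
    rw [Set.uIoc_of_le hab, Real.volume_Ioc]
    exact ENNReal.ofReal_ne_top
  -- main derivative statement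
  have main : ∀ p₀ : ℝ, HasDerivAt (fun p : ℝ => ∫ x in a..b, f (u x p) * w x)
      (∫ x in a..b, deriv f (u x p₀) * D x p₀ * w x) p₀ := by
    intro p₀
    obtain ⟨M, hM0, hM⟩ := Mex p₀
    have hball : Metric.ball p₀ 1 ⊆ Set.Icc (p₀ - 1) (p₀ + 1) := by
      rw [Real.ball_eq_Ioo]; exact Set.Ioo_subset_Icc_self
    have hF_int : IntervalIntegrable (fun x => f (u x p₀) * w x)
        MeasureTheory.volume a b := by
      obtain ⟨B, hB⟩ := isCompact_Icc.exists_bound_of_continuousOn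
        (s := Set.Icc a b) (hf.comp (contux p₀)).continuousOn
      have hB0 : 0 ≤ B := le_trans (norm_nonneg _) (hB a ⟨le_refl a, hab⟩)
      rw [intervalIntegrable_iff]
      apply MeasureTheory.Measure.integrableOn_of_bounded (M := B * Cw) hvol
        ((((hf.comp (contux p₀)).measurable).mul hw).aestronglyMeasurable)
      filter_upwards [MeasureTheory.self_mem_ae_restrict measurableSet_uIoc] with x hx
      have hx' := hIsub hx
      rw [Pi.mul_apply, Real.norm_eq_abs, abs_mul]
      exact mul_le_mul (hB x hx') (hCw x hx') (abs_nonneg _) hB0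
    have h_lip : ∀ᵐ t ∂(MeasureTheory.volume : MeasureTheory.Measure ℝ), t ∈ Set.uIoc a b →
        LipschitzOnWith (Real.nnabs (C * M * Cw)) (fun p => f (u t p) * w t)
          (Metric.ball p₀ 1) := by
      refine Filter.Eventually.of_forall fun t ht => ?_
      have ht' := hIsub ht
      apply LipschitzOnWith.of_dist_le_mul
      intro p hp q hq
      have hp' := hball hp
      have hq' := hball hq
      have huu : |u t p - u t q| ≤ M * |p - q| := by
        have := (convex_Icc (p₀ - 1) (p₀ + 1)).norm_image_sub_le_of_norm_hasDerivWithin_le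
          (f := fun q => u t q) (f' := fun z => D t z)
          (fun z hz => (hD t z).hasDerivWithinAt)
          (fun z hz => hM t ht' z hz) hq' hp'
        simpa [Real.norm_eq_abs] using this
      have h1 : |f (u t p) - f (u t q)| ≤ C * (M * |p - q|) :=
        le_trans (lipf (u t q) (u t p)) (mul_le_mul_of_nonneg_left huu hC0)
      have h2 : |w t| ≤ Cw := hCw t ht'
      rw [Real.dist_eq, Real.dist_eq, Real.coe_nnabs]
      calc |f (u t p) * w t - f (u t q) * w t|
          = |f (u t p) - f (u t q)| * |w t| := by rw [← abs_mul]; ring_nf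
      _ ≤ C * (M * |p - q|) * Cw := by
          exact mul_le_mul h1 h2 (abs_nonneg _)
            (mul_nonneg hC0 (mul_nonneg hM0 (abs_nonneg _)))
      _ = |C * M * Cw| * |p - q| := by
          rw [abs_of_nonneg (mul_nonneg (mul_nonneg hC0 hM0) hCw0)]; ring
    have h_diff : ∀ᵐ t ∂(MeasureTheory.volume : MeasureTheory.Measure ℝ), t ∈ Set.uIoc a b →
        HasDerivAt (fun p => f (u t p) * w t)
          (deriv f (u t p₀) * D t p₀ * w t) p₀ := by
      filter_upwards [hae p₀] with t ht htI
      have hne : u t p₀ ≠ r₀ := fun h => ht ⟨hIsub htI, h⟩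
      have h1 : HasDerivAt f (deriv f (u t p₀)) (u t p₀) := (hf1 _ hne).hasDerivAt
      exact ((h1.comp p₀ (hD t p₀)).mul_const (w t))
    exact (intervalIntegral.hasDerivAt_integral_of_dominated_loc_of_lip
      (F := fun p t => f (u t p) * w t)
      (F' := fun t => deriv f (u t p₀) * D t p₀ * w t)
      (bound := fun _ => C * M * Cw) (Metric.ball_mem_nhds p₀ one_pos)
      (Filter.Eventually.of_forall fun p => measF p) hF_int (measF' p₀) h_lip
      intervalIntegrable_const h_diff).2
  -- continuity of the derivative
  have contG' : Continuous fun p : ℝ => ∫ x in a..b, deriv f (u x p) * D x p * w x := by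
    rw [continuous_iff_continuousAt]
    intro p₀
    obtain ⟨M, hM0, hM⟩ := Mex p₀
    apply intervalIntegral.continuousAt_of_dominated_interval
      (bound := fun _ => C * M * Cw)
      (Filter.Eventually.of_forall fun p => measF' p) ?_ intervalIntegrable_const ?_
    · filter_upwards [Ioo_mem_nhds (by linarith : p₀ - 1 < p₀)
        (by linarith : p₀ < p₀ + 1)] with p hp
      refine Filter.Eventually.of_forall fun t ht => ?_
      have ht' := hIsub ht
      rw [Real.norm_eq_abs, abs_mul, abs_mul]
      have h1 : |deriv f (u t p)| ≤ C := hCall _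
      have h2 : |D t p| ≤ M := hM t ht' p (Set.Ioo_subset_Icc_self hp)
      have h3 : |w t| ≤ Cw := hCw t ht'
      exact mul_le_mul (mul_le_mul h1 h2 (abs_nonneg _) hC0) h3 (abs_nonneg _)
        (mul_nonneg hC0 hM0)
    · filter_upwards [hae p₀] with t ht htI
      have hne : u t p₀ ≠ r₀ := fun h => ht ⟨hIsub htI, h⟩
      have hc1 : ContinuousAt (fun p => deriv f (u t p)) p₀ :=
        (hfc.continuousAt (isOpen_compl_singleton.mem_nhds hne)).comp
          (contup t).continuousAt
      exact (hc1.mul (contDp t).continuousAt).mul continuousAt_const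
  have derivG : ∀ p : ℝ, deriv (fun p : ℝ => ∫ x in a..b, f (u x p) * w x) p
      = ∫ x in a..b, deriv f (u x p) * D x p * w x := fun p => (main p).deriv
  constructor
  · rw [contDiff_one_iff_deriv]
    refine ⟨fun p => (main p).differentiableAt, ?_⟩
    have : deriv (fun p : ℝ => ∫ x in a..b, f (u x p) * w x)
        = fun p : ℝ => ∫ x in a..b, deriv f (u x p) * D x p * w x := funext derivG
    rw [this]
    exact contG'
  · intro p
    rw [derivG p]
    apply intervalIntegral.integral_congr
    intro x _
    show deriv f (u x p) * D x p * w x = deriv f (u x p) * deriv (fun q => u x q) p * w x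
    rw [(hD x p).deriv]
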